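/- Let V = ∏_{n∈ℕ} 𝕂 with the product topology (𝕂 discrete), a linearly compact 𝕂-space, and let β : V → V be the left Bernoulli shift β((x_n)_{n∈ℕ}) = (x_{n+1})_{n∈ℕ}. Then (V,β) has completely positive topological entropy: ent*(V/Z, β̄) > 0 for every proper closed β-invariant 𝕂-subspace Z of V, where β̄ is induced by β. Consequently, every proper closed β-invariant 𝕂-subspace Z of V satisfies ent*(Z, β|_Z) = 0. -/

import Mathlib

open scoped ENNReal

/-- A topological `𝕂`-vector space `V` is *linearly compact* if it is Hausdorff, has a
neighbourhood basis at `0` consisting of open `𝕂`-subspaces, and every family of closed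
affine subspaces (cosets of closed `𝕂`-subspaces) with the finite intersection property
has nonempty intersection. -/
def IsLinearlyCompact (𝕂 V : Type*) [Field 𝕂] [AddCommGroup V] [Module 𝕂 V]
    [TopologicalSpace V] : Prop :=
  T2Space V ∧
  (∀ S ∈ nhds (0 : V), ∃ U : Submodule 𝕂 V, IsOpen (U : Set V) ∧ (U : Set V) ⊆ S) ∧
  ∀ (ι : Type) (N : ι → Submodule 𝕂 V) (v : ι → V),
    (∀ i, IsClosed ((N i : Set V))) →
    (∀ F : Finset ι, (⋂ i ∈ F, ((v i + ·) '' (N i : Set V))).Nonempty) →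
    (⋂ i, ((v i + ·) '' (N i : Set V))).Nonempty

/-- A family of proper `𝕂`-subspaces `N i` of `V` is *coindependent* if for every finite
set `F` of indices and every `i ∈ F`, `N i + ⋂_{j ∈ F, j ≠ i} N j = V`. -/
def Coindependent (𝕂 : Type*) {V ι : Type*} [Field 𝕂] [AddCommGroup V] [Module 𝕂 V]
    (N : ι → Submodule 𝕂 V) : Prop :=
  ∀ (F : Finset ι) (i : ι), i ∈ F → N i ⊔ (⨅ j ∈ F, ⨅ _ : j ≠ i, N j) = ⊤

/-- `Cn φ U n = U ∩ φ⁻¹U ∩ ⋯ ∩ φ⁻⁽ⁿ⁻¹⁾U`. -/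
noncomputable def Cn {𝕂 V : Type*} [Field 𝕂] [AddCommGroup V] [Module 𝕂 V]
    (φ : V →ₗ[𝕂] V) (U : Submodule 𝕂 V) (n : ℕ) : Submodule 𝕂 V :=
  ⨅ k ∈ Finset.range n, Submodule.comap (φ ^ k) U

/-- The `φ`-cotrajectory `C(φ,U) = ⋂_{n ∈ ℕ} φ⁻ⁿU = ⋂_{n ≥ 1} C_n(φ,U)`. -/
noncomputable def Cotraj {𝕂 V : Type*} [Field 𝕂] [AddCommGroup V] [Module 𝕂 V]
    (φ : V →ₗ[𝕂] V) (U : Submodule 𝕂 V) : Submodule 𝕂 V :=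
  ⨅ k : ℕ, Submodule.comap (φ ^ k) U

/-- `H*(φ,U) = lim_{n→∞} (1/n)·dim_𝕂 (U / C_n(φ,U))`, realized as a limsup in `ℝ≥0∞`
(the limit exists, so it coincides with the limsup). -/
noncomputable def HStar {𝕂 V : Type*} [Field 𝕂] [AddCommGroup V] [Module 𝕂 V]
    (φ : V →ₗ[𝕂] V) (U : Submodule 𝕂 V) : ℝ≥0∞ :=
  Filter.atTop.limsup fun n : ℕ =>
    (((Module.rank 𝕂 (↥U ⧸ Submodule.comap U.subtype (Cn φ U n))).toENat : ℕ∞) : ℝ≥0∞) /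
      (n : ℝ≥0∞)

/-- The topological entropy `ent*(V,φ) = sup_U H*(φ,U)`, the supremum ranging over all
open `𝕂`-subspaces `U` of `V`. -/
noncomputable def entStar (𝕂 V : Type*) [Field 𝕂] [AddCommGroup V] [Module 𝕂 V]
    [TopologicalSpace V] (φ : V →ₗ[𝕂] V) : ℝ≥0∞ :=
  ⨆ (U : Submodule 𝕂 V) (_ : IsOpen (U : Set V)), HStar φ U

/-- A topological flow `(V,φ)` has *completely positive topological entropy* if
`ent*(V/Z, φ̄) ≠ 0` for every proper closed `φ`-invariant `𝕂`-subspace `Z` of `V`,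
where `φ̄` is induced by `φ`. -/
def CompletelyPositiveEntStar (𝕂 V : Type*) [Field 𝕂] [AddCommGroup V] [Module 𝕂 V]
    [TopologicalSpace V] (φ : V →ₗ[𝕂] V) : Prop :=
  ∀ (Z : Submodule 𝕂 V), IsClosed (Z : Set V) → ∀ hinv : Z ≤ Z.comap φ, Z ≠ ⊤ →
    entStar 𝕂 (V ⧸ Z) (Submodule.mapQ Z Z φ hinv) ≠ 0

/-- The left (one-dimensional) Bernoulli shift on `∏_{n ∈ ℕ} 𝕂`. -/
def shiftL (𝕂 : Type*) [Field 𝕂] : (ℕ → 𝕂) →ₗ[𝕂] (ℕ → 𝕂) where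
  toFun x := fun n => x (n + 1)
  map_add' _ _ := rfl
  map_smul' _ _ := rfl


section Aux
variable {𝕂 : Type*} [Field 𝕂]

variable {𝕂 : Type*} [Field 𝕂]

lemma shiftL_pow_apply (k : ℕ) (x : ℕ → 𝕂) (n : ℕ) :
    (shiftL 𝕂 ^ k) x n = x (n + k) := by
  induction k generalizing x n with
  | zero => simp
  | succ k ih =>
    rw [pow_succ, Module.End.mul_apply]
    show (shiftL 𝕂 ^ k) ((shiftL 𝕂) x) n = x (n + (k+1))
    rw [ih]
    show x (n + k + 1) = x (n + (k + 1))
    ring_nf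

/-- The functional `x ↦ ∑_{i ≤ d} a i * x (i + k)`. -/
def Lam (a : ℕ → 𝕂) (d k : ℕ) : (ℕ → 𝕂) →ₗ[𝕂] 𝕂 where
  toFun x := ∑ i ∈ Finset.range (d+1), a i * x (i+k)
  map_add' x y := by simp [mul_add, Finset.sum_add_distrib]
  map_smul' c x := by simp [Finset.mul_sum, mul_left_comm]

lemma Lam_apply (a : ℕ → 𝕂) (d k : ℕ) (x : ℕ → 𝕂) :
    Lam a d k x = ∑ i ∈ Finset.range (d+1), a i * x (i+k) := rfl

lemma Lam_shift (a : ℕ → 𝕂) (d k : ℕ) (x : ℕ → 𝕂) :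
    Lam a d k x = Lam a d 0 ((shiftL 𝕂 ^ k) x) := by
  simp [Lam_apply, shiftL_pow_apply]

def Ln (a : ℕ → 𝕂) (d n : ℕ) : (ℕ → 𝕂) →ₗ[𝕂] (Fin n → 𝕂) :=
  LinearMap.pi fun k => Lam a d k.1

def lowZero (𝕂 : Type*) [Field 𝕂] (m : ℕ) : Submodule 𝕂 (ℕ → 𝕂) where
  carrier := {x | ∀ j < m, x j = 0}
  add_mem' := fun hx hy j hj => by simp [hx j hj, hy j hj]
  zero_mem' := fun j hj => rfl
  smul_mem' := fun c x hx j hj => by simp [hx j hj]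

lemma mem_lowZero_iff {m : ℕ} {x : ℕ → 𝕂} : x ∈ lowZero 𝕂 m ↔ ∀ j < m, x j = 0 := Iff.rfl

lemma isOpen_lowZero [TopologicalSpace 𝕂] [DiscreteTopology 𝕂] (m : ℕ) :
    IsOpen (lowZero 𝕂 m : Set (ℕ → 𝕂)) := by
  have h : (lowZero 𝕂 m : Set (ℕ → 𝕂)) = ⋂ j : Fin m, (fun x : ℕ → 𝕂 => x j.1) ⁻¹' {0} := by
    ext x
    simp only [Set.mem_iInter, Set.mem_preimage, Set.mem_singleton_iff, SetLike.mem_coe,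
      mem_lowZero_iff]
    exact ⟨fun h j => h j.1 j.2, fun h j hj => h ⟨j, hj⟩⟩
  rw [h]
  exact isOpen_iInter_of_finite fun j =>
    (continuous_apply (j.1 : ℕ)).isOpen_preimage _ (isOpen_discrete _)

/-- The recursive solution of the linear recurrence with data `y`. -/
noncomputable def sol (a : ℕ → 𝕂) (d n : ℕ) (y : ℕ → 𝕂) (j : ℕ) : 𝕂 :=
  if h : d < j ∧ j - d < n then
    (y (j - d) - ∑ i ∈ (Finset.range d).attach,
        a i.1 * sol a d n y (i.1 + (j - d))) / a d
  else 0
termination_by j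
decreasing_by
  have := Finset.mem_range.mp i.2
  omega

lemma sol_low (a : ℕ → 𝕂) (d n : ℕ) (y : ℕ → 𝕂) {j : ℕ} (hj : j < d + 1) :
    sol a d n y j = 0 := by
  rw [sol, dif_neg (by omega)]

lemma sol_spec (a : ℕ → 𝕂) (d n : ℕ) (y : ℕ → 𝕂) (had : a d ≠ 0) {k : ℕ}
    (hk1 : 1 ≤ k) (hkn : k < n) :
    ∑ i ∈ Finset.range (d+1), a i * sol a d n y (i + k) = y k := by
  rw [Finset.sum_range_succ]
  have hd : sol a d n y (d + k) =
      (y k - ∑ i ∈ (Finset.range d).attach, a i.1 * sol a d n y (i.1 + k)) / a d := by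
    rw [sol]
    simp only [Nat.add_sub_cancel_left]
    rw [dif_pos ⟨by omega, hkn⟩]
  rw [hd, Finset.sum_attach (Finset.range d) (fun i => a i * sol a d n y (i + k)),
    mul_comm, div_mul_cancel₀ _ had]
  ring

def Jmap (𝕂 : Type*) [Field 𝕂] (n : ℕ) : (Fin n → 𝕂) →ₗ[𝕂] (Fin (n-1) → 𝕂) :=
  LinearMap.pi fun k => LinearMap.proj (⟨k.1 + 1, by have := k.2; omega⟩ : Fin n)


variable {𝕂 : Type*} [Field 𝕂]

lemma exists_relation [TopologicalSpace 𝕂] [DiscreteTopology 𝕂]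
    (Z : Submodule 𝕂 (ℕ → 𝕂)) (hcl : IsClosed (Z : Set (ℕ → 𝕂))) (hne : Z ≠ ⊤) :
    ∃ (a : ℕ → 𝕂) (d : ℕ), a d ≠ 0 ∧ (∀ i, d < i → a i = 0) ∧
      ∀ x ∈ Z, ∑ i ∈ Finset.range (d+1), a i * x i = 0 := by
  classical
  obtain ⟨v, hv⟩ : ∃ v, v ∉ Z := by
    by_contra h
    push_neg at h
    exact hne (Submodule.eq_top_iff'.mpr h)
  obtain ⟨I, u, hu, hsub⟩ := (isOpen_pi_iff.mp hcl.isOpen_compl) v hv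
  set π : (ℕ → 𝕂) →ₗ[𝕂] (↥I → 𝕂) := LinearMap.pi fun i => LinearMap.proj i.1 with hπ
  set p : Submodule 𝕂 (↥I → 𝕂) := Z.map π with hp
  have hvp : (fun i : ↥I => v i.1) ∉ p := by
    rintro hmem
    obtain ⟨z, hz, hzeq⟩ := Submodule.mem_map.mp hmem
    refine hsub (fun i hi => ?_) hz
    have : z i = v i := congrFun hzeq ⟨i, hi⟩
    rw [this]
    exact (hu i hi).2
  obtain ⟨f, hfv, hfmap⟩ := Submodule.exists_dual_map_eq_bot_of_notMem hvp inferInstance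
  have hfZ : ∀ z ∈ Z, f (π z) = 0 := by
    intro z hz
    have : f (π z) ∈ p.map f := Submodule.mem_map_of_mem (Submodule.mem_map_of_mem hz)
    rw [hfmap] at this
    exact (Submodule.mem_bot 𝕂).mp this
  set a : ℕ → 𝕂 := fun i => if h : i ∈ I then f (Pi.single (⟨i, h⟩ : ↥I) 1) else 0 with ha
  have hfw : ∀ w : ↥I → 𝕂, f w = ∑ i : ↥I, w i * a i.1 := by
    intro w
    conv_lhs => rw [pi_eq_sum_univ w, map_sum]
    refine Finset.sum_congr rfl fun i _ => ?_
    rw [map_smul, smul_eq_mul]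
    congr 1
    have : (fun j => if i = j then (1:𝕂) else 0) = Pi.single i 1 := by
      funext j
      rw [Pi.single_apply]
      exact if_congr eq_comm rfl rfl
    rw [this, ha]
    simp only [i.2, dif_pos]
  set S : Finset ℕ := I.filter (fun i => a i ≠ 0) with hS
  have hSne : S.Nonempty := by
    by_contra h
    rw [Finset.not_nonempty_iff_eq_empty, Finset.filter_eq_empty_iff] at h
    apply hfv
    rw [hfw]
    refine Finset.sum_eq_zero fun i _ => ?_
    have : a i.1 = 0 := by
      by_contra hne'
      exact (h i.2) hne'
    rw [this, mul_zero]
  set d : ℕ := S.max' hSne with hd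
  have had : a d ≠ 0 := (Finset.mem_filter.mp (S.max'_mem hSne)).2
  have hd0 : ∀ i, d < i → a i = 0 := by
    intro i hi
    by_contra hne'
    have hiI : i ∈ I := by
      by_contra hiI
      exact hne' (dif_neg hiI)
    have : i ∈ S := Finset.mem_filter.mpr ⟨hiI, hne'⟩
    exact absurd (Finset.le_max' S i this) (by omega)
  refine ⟨a, d, had, hd0, fun x hx => ?_⟩
  have h1 : ∑ i ∈ I, x i * a i = 0 := by
    rw [← Finset.sum_coe_sort I (fun i => x i * a i), ← hfw]
    exact hfZ x hx
  have h1' : ∑ i ∈ I, a i * x i = 0 := by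
    rw [← h1]
    exact Finset.sum_congr rfl fun i _ => mul_comm _ _
  have e1 : ∑ i ∈ I, a i * x i = ∑ i ∈ I ∪ Finset.range (d+1), a i * x i :=
    Finset.sum_subset Finset.subset_union_left
      (fun i _ hni => by simp [ha, hni])
  have e2 : ∑ i ∈ Finset.range (d+1), a i * x i = ∑ i ∈ I ∪ Finset.range (d+1), a i * x i :=
    Finset.sum_subset Finset.subset_union_right
      (fun i _ hni => by
        rw [Finset.mem_range] at hni
        rw [hd0 i (by omega), zero_mul])
  rw [e2, ← e1, h1']


lemma rank_le_of_relation (Z : Submodule 𝕂 (ℕ → 𝕂)) (hinv : ∀ x ∈ Z, shiftL 𝕂 x ∈ Z)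
    (a : ℕ → 𝕂) (d : ℕ) (had : a d ≠ 0)
    (hrel : ∀ x ∈ Z, ∑ i ∈ Finset.range (d+1), a i * x i = 0) :
    Module.rank 𝕂 ↥Z ≤ (d : Cardinal) := by
  have hZpow : ∀ (k : ℕ), ∀ x ∈ Z, (shiftL 𝕂 ^ k) x ∈ Z := by
    intro k
    induction k with
    | zero => intro x hx; simpa using hx
    | succ k ih =>
      intro x hx
      rw [pow_succ', Module.End.mul_apply]
      exact hinv _ (ih x hx)
  have hrelk : ∀ x ∈ Z, ∀ k, ∑ i ∈ Finset.range (d+1), a i * x (i + k) = 0 := by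
    intro x hx k
    have := hrel _ (hZpow k x hx)
    simpa [shiftL_pow_apply] using this
  set ψ : ↥Z →ₗ[𝕂] (Fin d → 𝕂) :=
    LinearMap.pi (fun i : Fin d => (LinearMap.proj (i.1 : ℕ)).comp Z.subtype) with hψ
  have hinj : Function.Injective ψ := by
    rw [← LinearMap.ker_eq_bot, LinearMap.ker_eq_bot']
    intro z hz
    have hzlow : ∀ i : Fin d, (z : ℕ → 𝕂) i.1 = 0 := fun i => congrFun hz i
    have hall : ∀ j, (z : ℕ → 𝕂) j = 0 := by
      intro j
      induction j using Nat.strong_induction_on with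
      | _ j IH =>
        rcases lt_or_ge j d with h | h
        · exact hzlow ⟨j, h⟩
        · set k := j - d with hk
          have hj : j = d + k := by omega
          have h0 := hrelk (z : ℕ → 𝕂) z.2 k
          rw [Finset.sum_range_succ] at h0
          have hsum0 : ∑ i ∈ Finset.range d, a i * (z : ℕ → 𝕂) (i + k) = 0 :=
            Finset.sum_eq_zero fun i hi => by
              rw [IH (i + k) (by have := Finset.mem_range.mp hi; omega), mul_zero]
          rw [hsum0, zero_add] at h0
          have : (z : ℕ → 𝕂) (d + k) = 0 := by
            rcases mul_eq_zero.mp h0 with h' | h'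
            · exact absurd h' had
            · exact h'
          rwa [hj]
    exact Subtype.ext (funext hall)
  have h1 := LinearMap.rank_le_of_injective ψ hinj
  rwa [rank_fun', Fintype.card_fin] at h1

lemma entStar_eq_zero_of_rank_le {W : Type*} [AddCommGroup W] [Module 𝕂 W]
    [TopologicalSpace W] (φ : W →ₗ[𝕂] W) (D : ℕ) (h : Module.rank 𝕂 W ≤ (D : Cardinal)) :
    entStar 𝕂 W φ = 0 := by
  refine le_antisymm ?_ (zero_le)
  refine iSup₂_le fun U _ => ?_
  have hterm : ∀ n : ℕ,
      (((Module.rank 𝕂 (↥U ⧸ Submodule.comap U.subtype (Cn φ U n))).toENat : ℕ∞) : ℝ≥0∞) /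
        (n : ℝ≥0∞) ≤ (D : ℝ≥0∞) / (n : ℝ≥0∞) := by
    intro n
    have hr : Module.rank 𝕂 (↥U ⧸ Submodule.comap U.subtype (Cn φ U n)) ≤ (D : Cardinal) :=
      le_trans (rank_quotient_le _) (le_trans (Submodule.rank_le U) h)
    have h2 : (Module.rank 𝕂 (↥U ⧸ Submodule.comap U.subtype (Cn φ U n))).toENat ≤ (D : ℕ∞) :=
      Cardinal.toENat_le_nat.mpr hr
    have h3 := ENat.toENNReal_le.mpr h2
    rw [ENat.toENNReal_coe] at h3
    exact ENNReal.div_le_div_right h3 _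
  refine le_trans (Filter.limsup_le_limsup (Filter.Eventually.of_forall hterm)) ?_
  have htend : Filter.Tendsto (fun n : ℕ => (D : ℝ≥0∞) / (n : ℝ≥0∞)) Filter.atTop (nhds 0) := by
    simp only [div_eq_mul_inv]
    have := ENNReal.Tendsto.const_mul (a := (D : ℝ≥0∞))
      ENNReal.tendsto_inv_nat_nhds_zero (Or.inr (ENNReal.natCast_ne_top D))
    simpa using this
  exact le_of_eq htend.limsup_eq

end Aux

/-- Let `V = ∏_{n ∈ ℕ} 𝕂` with the product topology (`𝕂` discrete) and
`β` the left Bernoulli shift.  Then `(V,β)` has completely positive topological entropy,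
and consequently every proper closed `β`-invariant `𝕂`-subspace `Z` of `V` satisfies
`ent*(Z, β|_Z) = 0`. -/
theorem stmt_16 {𝕂 : Type*} [Field 𝕂] [TopologicalSpace 𝕂] [DiscreteTopology 𝕂] :
    CompletelyPositiveEntStar 𝕂 (ℕ → 𝕂) (shiftL 𝕂) ∧
    ∀ (Z : Submodule 𝕂 (ℕ → 𝕂)), IsClosed (Z : Set (ℕ → 𝕂)) →
      ∀ hZinv : ∀ x ∈ Z, shiftL 𝕂 x ∈ Z, Z ≠ ⊤ →
      entStar 𝕂 ↥Z ((shiftL 𝕂).restrict hZinv) = 0 := by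
  classical
  haveI : ContinuousAdd 𝕂 := ⟨continuous_of_discreteTopology⟩
  have main : ∀ (Z : Submodule 𝕂 (ℕ → 𝕂)), IsClosed (Z : Set (ℕ → 𝕂)) →
      ∀ hinv : Z ≤ Z.comap (shiftL 𝕂), Z ≠ ⊤ →
      entStar 𝕂 ((ℕ → 𝕂) ⧸ Z) (Submodule.mapQ Z Z (shiftL 𝕂) hinv) ≠ 0 := by
    intro Z hcl hinv hne
    set β := shiftL 𝕂 with hβdef
    obtain ⟨a, d, had, hd0, hrel⟩ := exists_relation Z hcl hne
    have hZpow : ∀ (k : ℕ), ∀ x ∈ Z, (β ^ k) x ∈ Z := by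
      intro k
      induction k with
      | zero => intro x hx; simpa using hx
      | succ k ih =>
        intro x hx
        rw [pow_succ', Module.End.mul_apply]
        exact hinv (ih x hx)
    have hrelk : ∀ x ∈ Z, ∀ k, Lam a d k x = 0 := by
      intro x hx k
      rw [Lam_shift]
      have h1 := hrel _ (hZpow k x hx)
      simpa [Lam_apply] using h1
    set U : Submodule 𝕂 (ℕ → 𝕂) := Z ⊔ lowZero 𝕂 (d+1) with hUdef
    have hUopen : IsOpen (U : Set (ℕ → 𝕂)) :=
      Submodule.isOpen_mono le_sup_right (isOpen_lowZero (d+1))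
    set φq := Submodule.mapQ Z Z β hinv with hφq
    set Ub : Submodule 𝕂 ((ℕ → 𝕂) ⧸ Z) := U.map Z.mkQ with hUbdef
    have hUbopen : IsOpen (Ub : Set ((ℕ → 𝕂) ⧸ Z)) := by
      have h1 : (Ub : Set ((ℕ → 𝕂) ⧸ Z)) = Z.mkQ '' (U : Set (ℕ → 𝕂)) := by
        rw [hUbdef]; rfl
      rw [h1]
      exact Submodule.isOpenMap_mkQ Z _ hUopen
    have hpow : ∀ (k : ℕ) (x : ℕ → 𝕂), (φq ^ k) (Z.mkQ x) = Z.mkQ ((β ^ k) x) := by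
      intro k
      induction k with
      | zero => intro x; simp
      | succ k ih =>
        intro x
        rw [pow_succ, pow_succ, Module.End.mul_apply, Module.End.mul_apply]
        rw [hφq, Submodule.mkQ_apply, Submodule.mapQ_apply, ← Submodule.mkQ_apply, ← hφq, ih]
    have hmemU : ∀ v ∈ U, Lam a d 0 v = 0 := by
      intro v hv
      rw [hUdef] at hv
      obtain ⟨z, hz, w, hw, rfl⟩ := Submodule.mem_sup.mp hv
      rw [map_add, hrelk z hz 0, zero_add, Lam_apply]
      refine Finset.sum_eq_zero fun i hi => ?_
      have hw0 : w (i + 0) = 0 := hw (i + 0) (by have := Finset.mem_range.mp hi; omega)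
      rw [hw0, mul_zero]
    have hkerL : ∀ n : ℕ, Z ≤ LinearMap.ker (Ln a d n) := by
      intro n x hx
      rw [LinearMap.mem_ker]
      ext k
      show Lam a d k.1 x = 0
      exact hrelk x hx k.1
    have hterm : ∀ n : ℕ, ((n - 1 : ℕ) : Cardinal) ≤
        Module.rank 𝕂 (↥Ub ⧸ Submodule.comap Ub.subtype (Cn φq Ub n)) := by
      intro n
      set Lbar : ((ℕ → 𝕂) ⧸ Z) →ₗ[𝕂] (Fin n → 𝕂) := Z.liftQ (Ln a d n) (hkerL n) with hLbar
      set Θ₀ : ↥Ub →ₗ[𝕂] (Fin (n-1) → 𝕂) := (Jmap 𝕂 n).comp (Lbar.comp Ub.subtype) with hΘ₀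
      have hker2 : Submodule.comap Ub.subtype (Cn φq Ub n) ≤ LinearMap.ker Θ₀ := by
        intro uu huu
        have hmem' : ∀ k, k < n → (φq ^ k) (uu : (ℕ → 𝕂) ⧸ Z) ∈ Ub := by
          have h1 : (uu : (ℕ → 𝕂) ⧸ Z) ∈ Cn φq Ub n := huu
          simp only [Cn, Submodule.mem_iInf, Finset.mem_range, Submodule.mem_comap] at h1
          exact fun k hk => h1 k hk
        obtain ⟨x, hxU, hmkx⟩ := Submodule.mem_map.mp uu.2
        have hxw : ∀ k, k < n → (β ^ k) x ∈ U := by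
          intro k hk
          have h1 := hmem' k hk
          rw [← hmkx, hpow] at h1
          rw [hUbdef] at h1
          obtain ⟨w, hwU, hw⟩ := Submodule.mem_map.mp h1
          rw [Submodule.mkQ_apply, Submodule.mkQ_apply] at hw
          have hsub : w - (β ^ k) x ∈ Z := (Submodule.Quotient.eq Z).mp hw
          have heq : (β ^ k) x = w - (w - (β ^ k) x) := (sub_sub_cancel w _).symm
          rw [heq]
          exact Submodule.sub_mem _ hwU ((le_sup_left : Z ≤ U) hsub)
        have hLzero : Lbar (uu : (ℕ → 𝕂) ⧸ Z) = 0 := by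
          rw [← hmkx, hLbar, Submodule.mkQ_apply, Submodule.liftQ_apply]
          ext k
          show Lam a d k.1 x = 0
          rw [Lam_shift]
          exact hmemU _ (hxw k.1 k.2)
        rw [LinearMap.mem_ker, hΘ₀, LinearMap.comp_apply, LinearMap.comp_apply]
        have : Ub.subtype uu = (uu : (ℕ → 𝕂) ⧸ Z) := rfl
        rw [this, hLzero, map_zero]
      set Θ : (↥Ub ⧸ Submodule.comap Ub.subtype (Cn φq Ub n)) →ₗ[𝕂] (Fin (n-1) → 𝕂) :=
        Submodule.liftQ _ Θ₀ hker2 with hΘ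
      have hsurj : Function.Surjective Θ := by
        intro zv
        set y : ℕ → 𝕂 := fun k => if h : k - 1 < n - 1 ∧ 1 ≤ k then zv ⟨k-1, h.1⟩ else 0 with hy
        set x := sol a d n y with hx
        have hxlow : x ∈ lowZero 𝕂 (d+1) := fun j hj => sol_low a d n y hj
        have hxU : x ∈ U := by
          rw [hUdef]; exact Submodule.mem_sup_right hxlow
        refine ⟨Submodule.Quotient.mk ⟨Z.mkQ x, Submodule.mem_map_of_mem hxU⟩, ?_⟩
        rw [hΘ, Submodule.liftQ_apply, hΘ₀, LinearMap.comp_apply, LinearMap.comp_apply]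
        have h1 : Ub.subtype ⟨Z.mkQ x, Submodule.mem_map_of_mem hxU⟩ = Z.mkQ x := rfl
        rw [h1, hLbar, Submodule.mkQ_apply, Submodule.liftQ_apply]
        ext k
        show Lam a d (k.1 + 1) x = zv k
        have hk1 : (1 : ℕ) ≤ k.1 + 1 := by omega
        have hkn : k.1 + 1 < n := by have := k.2; omega
        have h2 : Lam a d (k.1 + 1) x = y (k.1 + 1) := by
          rw [Lam_apply, hx]
          exact sol_spec a d n y had hk1 hkn
        rw [h2]
        have hcond : (k.1 + 1) - 1 < n - 1 ∧ 1 ≤ k.1 + 1 := ⟨by have := k.2; omega, hk1⟩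
        have hfin : (⟨(k.1 + 1) - 1, hcond.1⟩ : Fin (n - 1)) = k := Fin.ext (by simp)
        calc y (k.1 + 1) = zv ⟨(k.1 + 1) - 1, hcond.1⟩ := by
              simp only [hy]; rw [dif_pos hcond]
          _ = zv k := by rw [hfin]
      have h3 := LinearMap.rank_le_of_surjective Θ hsurj
      rwa [rank_fun', Fintype.card_fin] at h3
    have hhalf : (1/2 : ℝ≥0∞) ≤ HStar φq Ub := by
      have hev : ∀ᶠ n in Filter.atTop, (1/2 : ℝ≥0∞) ≤
          (((Module.rank 𝕂 (↥Ub ⧸ Submodule.comap Ub.subtype (Cn φq Ub n))).toENat : ℕ∞) : ℝ≥0∞) /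
            (n : ℝ≥0∞) := by
        rw [Filter.eventually_atTop]
        refine ⟨2, fun n hn => ?_⟩
        have h1 := hterm n
        have h2 : ((n - 1 : ℕ) : ℕ∞) ≤
            (Module.rank 𝕂 (↥Ub ⧸ Submodule.comap Ub.subtype (Cn φq Ub n))).toENat := by
          exact Cardinal.enat_gc.le_u (by exact h1)
        have h3 : ((n - 1 : ℕ) : ℝ≥0∞) ≤
            (((Module.rank 𝕂 (↥Ub ⧸ Submodule.comap Ub.subtype (Cn φq Ub n))).toENat : ℕ∞) : ℝ≥0∞) := by
          have := ENat.toENNReal_le.mpr h2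
          rwa [ENat.toENNReal_coe] at this
        have h4 : (1/2 : ℝ≥0∞) ≤ ((n - 1 : ℕ) : ℝ≥0∞) / (n : ℝ≥0∞) := by
          rw [ENNReal.le_div_iff_mul_le (Or.inl (by exact_mod_cast (by omega : n ≠ 0)))
            (Or.inl (ENNReal.natCast_ne_top n))]
          rw [one_div, ← ENNReal.div_eq_inv_mul]
          rw [ENNReal.div_le_iff_le_mul (Or.inl (by norm_num)) (Or.inl (by norm_num))]
          have h5 : ((n - 1 : ℕ) : ℝ≥0∞) * 2 = (((n - 1) * 2 : ℕ) : ℝ≥0∞) := by push_cast; ring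
          rw [h5]
          have h6 : n ≤ (n - 1) * 2 := by omega
          exact Nat.cast_le.mpr h6
        exact le_trans h4 (ENNReal.div_le_div_right h3 _)
      refine le_trans (Filter.le_liminf_of_le (by isBoundedDefault) hev) ?_
      exact Filter.liminf_le_limsup
    intro h0
    have hle : HStar φq Ub ≤ entStar 𝕂 ((ℕ → 𝕂) ⧸ Z) φq := by
      exact le_iSup₂ (f := fun (W : Submodule 𝕂 ((ℕ → 𝕂) ⧸ Z)) (_ : IsOpen (W : Set ((ℕ → 𝕂) ⧸ Z))) =>
        HStar φq W) Ub hUbopen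
    rw [hφq] at hle
    rw [h0] at hle
    have : (1/2 : ℝ≥0∞) ≤ 0 := le_trans hhalf hle
    norm_num at this
  refine ⟨fun Z hcl hinv hne => main Z hcl hinv hne, fun Z hcl hZinv hne => ?_⟩
  obtain ⟨a, d, had, hd0, hrel⟩ := exists_relation Z hcl hne
  exact entStar_eq_zero_of_rank_le _ d (rank_le_of_relation Z hZinv a d had hrel)
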